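/- Let D, f : ℝ^d × ℝ^d → ℝ^d (D depending only on the second variable, D : ℝ^d → ℝ^d), g : ℝ^d × ℝ^d → ℝ^{d×n}, and suppose there are constants K > 0 and p > 2 such that 2⟨x − a D(y/a), f(x,y)⟩ + (p−1)|g(x,y)|² ≤ K(1 + |x|² + |y|²) for all x, y ∈ ℝ^d and all a ∈ (0,1]. Fix h ≥ 1 and define truncations f_h, g_h by f_h(x,y) = f(x,y) if |x| ∨ |y| ≤ h and f_h(x,y) = ((|x|∨|y|)/h) f((h/(|x|∨|y|))(x,y)) otherwise, similarly for g_h. Then 2⟨x − D(y), f_h(x,y)⟩ + (p−1)|g_h(x,y)|² ≤ 2K(1 + |x|² + |y|²) for all x, y ∈ ℝ^d. -/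

import Mathlib

open Real

private lemma kh_scalar (h m I G p K X Y : ℝ) (hh : 1 ≤ h) (hm : h < m)
    (hK : 0 ≤ K) (hmX : m ^ 2 ≤ X ^ 2 + Y ^ 2)
    (key : 2 * (h / m * I) + (p - 1) * G ^ 2
      ≤ K * (1 + (h / m * X) ^ 2 + (h / m * Y) ^ 2)) :
    2 * (m / h * I) + (p - 1) * (m / h * G) ^ 2 ≤ 2 * K * (1 + X ^ 2 + Y ^ 2) := by
  have hh0 : (0:ℝ) < h := lt_of_lt_of_le one_pos hh
  have hm0 : (0:ℝ) < m := hh0.trans hm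
  have key2 := mul_le_mul_of_nonneg_left key (le_of_lt (by positivity : (0:ℝ) < (m/h)^2))
  have e1 : (m/h)^2 * (2 * (h/m * I) + (p-1) * G^2)
      = 2 * (m/h * I) + (p-1) * ((m/h) * G)^2 := by
    field_simp
  have e2 : (m/h)^2 * (K * (1 + (h/m*X)^2 + (h/m*Y)^2))
      = K * ((m/h)^2 + X^2 + Y^2) := by
    field_simp
  rw [e1, e2] at key2
  have hmh3 : (m/h)^2 ≤ m^2 := by
    have h1 : m/h ≤ m := by rw [div_le_iff₀ hh0]; nlinarith
    have h0 : 0 ≤ m/h := div_nonneg hm0.le hh0.le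
    nlinarith
  nlinarith [key2, sq_nonneg X, sq_nonneg Y]

theorem truncated_khasminskii
    {d n : ℕ}
    (D : EuclideanSpace ℝ (Fin d) → EuclideanSpace ℝ (Fin d))
    (f fh : EuclideanSpace ℝ (Fin d) → EuclideanSpace ℝ (Fin d) → EuclideanSpace ℝ (Fin d))
    (g gh : EuclideanSpace ℝ (Fin d) → EuclideanSpace ℝ (Fin d) → EuclideanSpace ℝ (Fin d × Fin n))
    (K p : ℝ) (hK : 0 < K) (hp : 2 < p)
    (hKhas : ∀ x y : EuclideanSpace ℝ (Fin d), ∀ a : ℝ, a ∈ Set.Ioc (0:ℝ) 1 →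
      2 * inner ℝ (x - a • D (a⁻¹ • y)) (f x y) + (p - 1) * ‖g x y‖ ^ 2
        ≤ K * (1 + ‖x‖ ^ 2 + ‖y‖ ^ 2))
    (h : ℝ) (hh : 1 ≤ h)
    (hfh : ∀ x y : EuclideanSpace ℝ (Fin d),
      fh x y = if ‖x‖ ⊔ ‖y‖ ≤ h then f x y
        else ((‖x‖ ⊔ ‖y‖) / h) • f ((h / (‖x‖ ⊔ ‖y‖)) • x) ((h / (‖x‖ ⊔ ‖y‖)) • y))
    (hgh : ∀ x y : EuclideanSpace ℝ (Fin d),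
      gh x y = if ‖x‖ ⊔ ‖y‖ ≤ h then g x y
        else ((‖x‖ ⊔ ‖y‖) / h) • g ((h / (‖x‖ ⊔ ‖y‖)) • x) ((h / (‖x‖ ⊔ ‖y‖)) • y)) :
    ∀ x y : EuclideanSpace ℝ (Fin d),
      2 * inner ℝ (x - D y) (fh x y) + (p - 1) * ‖gh x y‖ ^ 2
        ≤ 2 * K * (1 + ‖x‖ ^ 2 + ‖y‖ ^ 2) := by
  intro x y
  by_cases hc : ‖x‖ ⊔ ‖y‖ ≤ h
  · rw [hfh, hgh, if_pos hc, if_pos hc]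
    have key := hKhas x y 1 ⟨one_pos, le_refl 1⟩
    simp only [inv_one, one_smul] at key
    nlinarith [sq_nonneg ‖x‖, sq_nonneg ‖y‖, hK.le]
  · rw [hfh, hgh, if_neg hc, if_neg hc]
    set m := ‖x‖ ⊔ ‖y‖ with hm
    have hm1 : h < m := not_le.mp hc
    have hhpos : (0:ℝ) < h := lt_of_lt_of_le one_pos hh
    have hmpos : (0:ℝ) < m := hhpos.trans hm1
    have ha : h / m ∈ Set.Ioc (0:ℝ) 1 :=
      ⟨div_pos hhpos hmpos, (div_le_one hmpos).mpr hm1.le⟩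
    have key := hKhas ((h/m) • x) ((h/m) • y) (h/m) ha
    rw [inv_smul_smul₀ (ne_of_gt ha.1), ← smul_sub, real_inner_smul_left] at key
    simp only [norm_smul, Real.norm_of_nonneg ha.1.le] at key
    rw [real_inner_smul_right, norm_smul, Real.norm_of_nonneg (div_nonneg hmpos.le hhpos.le)]
    have hmx : m ^ 2 ≤ ‖x‖ ^ 2 + ‖y‖ ^ 2 := by
      rcases max_cases ‖x‖ ‖y‖ with ⟨h1, _⟩ | ⟨h1, _⟩ <;> rw [hm, h1] <;>
        nlinarith [sq_nonneg ‖x‖, sq_nonneg ‖y‖]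
    exact kh_scalar h m _ _ p K ‖x‖ ‖y‖ hh hm1 hK.le hmx key
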